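/- If w is a word with |alph(w)| > ⌈|w|/2⌉, then c(w) = 1; that is, there is a Lie polynomial over ℤ in which w appears with coefficient 1. -/

import Mathlib

open MonoidAlgebra

attribute [local instance 100] LieRing.ofAssociativeRing

/-- The word `w` viewed as a monomial in the free associative algebra `K⟨A⟩`. -/
noncomputable def word (K : Type*) [CommRing K] {A : Type*} (w : List A) :
    MonoidAlgebra K (FreeMonoid A) :=
  MonoidAlgebra.single (FreeMonoid.ofList w) 1

/-- The adjoint `l*` of the left-normed Lie bracketing, defined by the recursion
`l*(ε) = 0`, `l*(a) = a`, `l*(aub) = l*(au)·b − l*(ub)·a`. -/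
noncomputable def lstar (K : Type*) [CommRing K] {A : Type*} :
    List A → MonoidAlgebra K (FreeMonoid A)
  | [] => 0
  | [a] => word K [a]
  | a :: b :: r =>
      lstar K (a :: (b :: r).dropLast) * word K [(b :: r).getLast (by simp)]
        - lstar K (b :: r) * word K [a]
  termination_by w => w.length
  decreasing_by
    · simp [List.length_dropLast]
    · simp

/-- The free Lie algebra `L_K(A)`: the Lie subalgebra of `K⟨A⟩` generated by the letters. -/
noncomputable def freeLie (K : Type*) [CommRing K] (A : Type*) :
    LieSubalgebra K (MonoidAlgebra K (FreeMonoid A)) :=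
  LieSubalgebra.lieSpan K _ {P | ∃ a : A, P = word K [a]}

namespace S13

variable {A : Type*} [DecidableEq A]

/-- Left-normed (left-to-right) Lie bracketing of a word. -/
noncomputable def lnb : List A → MonoidAlgebra ℤ (FreeMonoid A)
  | [] => 0
  | x :: s => s.foldl (fun P y => ⁅P, word ℤ [y]⁆) (word ℤ [x])

/-- Coefficient of the word `w` in the left-normed bracketing of `v`. -/
noncomputable def E (v w : List A) : ℤ := (lnb v).coeff (FreeMonoid.ofList w)

lemma lnb_snoc (v : List A) (hv : v ≠ []) (y : A) :
    lnb (v ++ [y]) = ⁅lnb v, word ℤ [y]⁆ := by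
  cases v with
  | nil => exact absurd rfl hv
  | cons x s =>
    show lnb (x :: (s ++ [y])) = _
    simp only [lnb, List.foldl_append, List.foldl_cons, List.foldl_nil]

lemma lnb_mem_freeLie (v : List A) (hv : v ≠ []) : lnb v ∈ freeLie ℤ A := by
  induction v using List.reverseRecOn with
  | nil => exact absurd rfl hv
  | append_singleton s y ih =>
    cases s with
    | nil =>
      show word ℤ [y] ∈ _
      exact LieSubalgebra.subset_lieSpan ⟨y, rfl⟩
    | cons x t =>
      rw [lnb_snoc _ (by simp) y]
      exact LieSubalgebra.lie_mem _ (ih (by simp))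
        (LieSubalgebra.subset_lieSpan ⟨y, rfl⟩)

lemma E_nil (w : List A) : E [] w = 0 := by
  simp [E, lnb]

lemma E_single (x : A) (w : List A) : E [x] w = if w = [x] then 1 else 0 := by
  show (MonoidAlgebra.single (FreeMonoid.ofList [x]) (1:ℤ)).coeff (FreeMonoid.ofList w)
      = if w = [x] then 1 else 0
  classical
  rw [MonoidAlgebra.coeff_single, Finsupp.single_apply]
  by_cases h : w = [x]
  · subst h; simp
  · rw [if_neg h, if_neg (fun hh => h (by simpa using (FreeMonoid.ofList.injective hh.symm)))]

lemma mulR (P : MonoidAlgebra ℤ (FreeMonoid A)) (c : A) (w : List A) :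
    (P * word ℤ [c]).coeff (FreeMonoid.ofList w)
      = if w.getLast? = some c then P.coeff (FreeMonoid.ofList w.dropLast) else 0 := by
  by_cases h : w.getLast? = some c
  · have hw : w ≠ [] := by rintro rfl; simp at h
    have hc : w.getLast hw = c := by
      rw [List.getLast?_eq_getLast hw] at h; exact Option.some_inj.mp h
    have hcat : w.dropLast ++ [c] = w := by
      rw [← hc]; exact List.dropLast_append_getLast hw
    rw [if_pos h, word]
    rw [MonoidAlgebra.coeff_mul_single_eq_coeff_mul (x := P) (r := 1)
      (m := FreeMonoid.ofList [c]) (FreeMonoid.ofList w.dropLast)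
      (m₁ := FreeMonoid.ofList w) ?_, mul_one]
    intro a _
    constructor
    · intro hh
      have h1 : a.toList ++ [c] = w := by
        have := congrArg FreeMonoid.toList hh
        simpa [FreeMonoid.toList_mul] using this
      have h2 : a.toList = w.dropLast := by
        have := h1.trans hcat.symm
        exact (List.append_left_inj _).mp this
      rw [← FreeMonoid.ofList_toList a, h2]
    · rintro rfl
      rw [← FreeMonoid.ofList_append, hcat]
  · rw [if_neg h]
    apply MonoidAlgebra.mul_single_apply_of_not_exists_mul
    rintro ⟨d, hd⟩
    apply h
    have : w = d.toList ++ [c] := by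
      have := congrArg FreeMonoid.toList hd
      simpa [FreeMonoid.toList_mul] using this
    rw [this, List.getLast?_concat]

lemma mulL (P : MonoidAlgebra ℤ (FreeMonoid A)) (c : A) (w : List A) :
    (word ℤ [c] * P).coeff (FreeMonoid.ofList w)
      = if w.head? = some c then P.coeff (FreeMonoid.ofList w.tail) else 0 := by
  by_cases h : w.head? = some c
  · have hw : w ≠ [] := by rintro rfl; simp at h
    have hc : w.head hw = c := by
      rw [List.head?_eq_head hw] at h; exact Option.some_inj.mp h
    have hcat : c :: w.tail = w := by
      rw [← hc]; exact List.cons_head_tail hw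
    rw [if_pos h, word]
    rw [MonoidAlgebra.coeff_single_mul_eq_mul_coeff (x := P) (r := 1)
      (m := FreeMonoid.ofList [c]) (m₁ := FreeMonoid.ofList w)
      (FreeMonoid.ofList w.tail) ?_, one_mul]
    intro a _
    constructor
    · intro hh
      have h1 : c :: a.toList = w := by
        have := congrArg FreeMonoid.toList hh
        simpa [FreeMonoid.toList_mul] using this
      have h2 : a.toList = w.tail := by
        have := h1.trans hcat.symm
        simpa using this
      rw [← FreeMonoid.ofList_toList a, h2]
    · rintro rfl
      rw [← FreeMonoid.ofList_append]
      show FreeMonoid.ofList (c :: w.tail) = _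
      rw [hcat]
  · rw [if_neg h]
    apply MonoidAlgebra.single_mul_apply_of_not_exists_mul
    rintro ⟨d, hd⟩
    apply h
    have : w = c :: d.toList := by
      have := congrArg FreeMonoid.toList hd
      simpa [FreeMonoid.toList_mul] using this
    rw [this]; rfl

/-- The fundamental recursion for coefficients of left-normed bracketings. -/
lemma E_concat (v : List A) (y : A) (w : List A) (hw : 2 ≤ w.length) :
    E (v ++ [y]) w = (if w.getLast? = some y then E v w.dropLast else 0)
      - (if w.head? = some y then E v w.tail else 0) := by
  cases v with
  | nil =>
    simp only [List.nil_append]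
    rw [E_single, if_neg (by rintro rfl; simp at hw)]
    rw [E_nil, E_nil]
    simp
  | cons x s =>
    show (lnb ((x :: s) ++ [y])).coeff (FreeMonoid.ofList w) = _
    rw [lnb_snoc _ (by simp) y, Ring.lie_def, MonoidAlgebra.coeff_sub, Finsupp.sub_apply, mulR, mulL]
    rfl

lemma E_self (w : List A) (a : A) (ha : w.head? = some a) (h1 : w.count a = 1) :
    E w w = 1 := by
  induction w using List.reverseRecOn with
  | nil => simp at ha
  | append_singleton s y ih =>
    cases s with
    | nil =>
      simp only [List.nil_append] at ha h1 ⊢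
      have : a = y := by simpa using ha.symm
      subst this
      rw [E_single]; simp
    | cons x t =>
      have hhd : ((x :: t) ++ [y]).head? = some x := rfl
      have hax : x = a := by rw [hhd] at ha; exact Option.some_inj.mp ha
      subst hax
      have hcx : (x :: t).count x + [y].count x = 1 := by
        rw [← List.count_append]; exact h1
      have hge : 1 ≤ (x :: t).count x := by
        simp [List.count_cons]
      have hyx : y ≠ x := by
        intro hy; subst hy
        have : 1 ≤ [y].count y := by simp
        omega
      have h0 : [y].count x = 0 := by
        rw [List.count_eq_zero]
        intro hmem
        have hxy : x = y := by simpa using hmem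
        exact hyx hxy.symm
      have hcnt : (x :: t).count x = 1 := by omega
      rw [E_concat (x :: t) y ((x :: t) ++ [y]) (by simp)]
      rw [if_pos List.getLast?_concat]
      have hne : ¬(((x :: t) ++ [y]).head? = some y) := by
        rw [hhd]; exact fun hc => hyx (Option.some_inj.mp hc).symm
      rw [if_neg hne]
      rw [List.dropLast_concat, sub_zero]
      exact ih rfl hcnt

lemma E_strip (w : List A) (a : A) (hh : w.head? = some a) (hl : w.getLast? ≠ some a)
    (hw : 2 ≤ w.length) (v : List A) :
    E (v ++ [a]) w = - E v w.tail := by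
  rw [E_concat v a w hw, if_neg hl, if_pos hh]; ring

/- window helpers -/

lemma win_length (w : List A) (p m : ℕ) (h : p + m ≤ w.length) :
    ((w.drop p).take m).length = m := by
  simp only [List.length_take, List.length_drop]; omega

lemma win_getLast? (w : List A) (p m : ℕ) (h : p + m + 1 ≤ w.length) :
    ((w.drop p).take (m+1)).getLast? = some (w[p + m]'(by omega)) := by
  have hl : ((w.drop p).take (m+1)).length = m + 1 := win_length w p (m+1) (by omega)
  rw [List.getLast?_eq_getElem?, hl]
  simp only [Nat.add_sub_cancel]
  rw [List.getElem?_eq_getElem (by rw [hl]; omega)]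
  congr 1
  simp only [List.getElem_take, List.getElem_drop]

lemma win_head? (w : List A) (p m : ℕ) (h : p + 1 ≤ w.length) :
    ((w.drop p).take (m+1)).head? = some (w[p]'(by omega)) := by
  have hl : 0 < ((w.drop p).take (m+1)).length := by
    simp only [List.length_take, List.length_drop]; omega
  rw [List.head?_eq_getElem?]
  rw [List.getElem?_eq_getElem hl]
  congr 1
  simp only [List.getElem_take, List.getElem_drop, Nat.add_zero]

lemma win_dropLast (w : List A) (p m : ℕ) (h : p + m + 1 ≤ w.length) :
    ((w.drop p).take (m+1)).dropLast = (w.drop p).take m := by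
  rw [List.dropLast_eq_take, win_length w p (m+1) (by omega)]
  simp only [Nat.add_sub_cancel]
  rw [List.take_take]
  congr 1; omega

lemma win_tail (w : List A) (p m : ℕ) :
    ((w.drop p).take (m+1)).tail = (w.drop (p+1)).take m := by
  rw [← List.drop_one, List.drop_take, List.drop_drop]
  norm_num

lemma drop_head? (w : List A) (j : ℕ) (h : j < w.length) :
    (w.drop j).head? = some (w[j]'h) := by
  rw [List.head?_eq_getElem?]
  rw [List.getElem?_eq_getElem (by simp only [List.length_drop]; omega)]
  congr 1
  simp only [List.getElem_drop, Nat.add_zero]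

lemma drop_getLast? (w : List A) (j : ℕ) (h : j < w.length) :
    (w.drop j).getLast? = some (w[w.length - 1]'(by omega)) := by
  rw [List.getLast?_eq_getElem?, List.length_drop]
  rw [List.getElem?_eq_getElem (by simp only [List.length_drop]; omega)]
  congr 1
  simp only [List.getElem_drop]
  congr 1; omega

lemma span_eval_zero {S : Set (List A → ℤ)} {F : List A → ℤ}
    (hF : F ∈ Submodule.span ℤ S) (pt : List A) (h : ∀ g ∈ S, g pt = 0) : F pt = 0 := by
  have hle : Submodule.span ℤ S ≤
      LinearMap.ker (LinearMap.proj (R := ℤ) (φ := fun _ : List A => ℤ) pt) := by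
    rw [Submodule.span_le]
    intro g hg
    simpa [LinearMap.mem_ker] using h g hg
  simpa using hle hF


noncomputable def gen (w : List A) (p m : ℕ) : List A → ℤ := fun v => E v ((w.drop p).take m)

lemma windowA (w : List A) : ∀ k, k + 1 ≤ w.length →
    (fun v => E (v ++ w.drop (w.length - k)) w - E v (w.take (w.length - k)))
      ∈ Submodule.span ℤ
        {f : List A → ℤ | ∃ p, 1 ≤ p ∧ p ≤ k ∧ f = gen w p (w.length - k)} := by
  intro k
  induction k with
  | zero =>
    intro _
    have h0 : (fun v => E (v ++ w.drop (w.length - 0)) w - E v (w.take (w.length - 0)))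
        = (0 : List A → ℤ) := by
      funext v
      simp [List.drop_length, List.take_length]
    rw [h0]; exact Submodule.zero_mem _
  | succ k ih =>
    intro hk
    have hk' : k + 1 ≤ w.length := by omega
    have hF := ih hk'
    have hmn : w.length - k = (w.length - (k+1)) + 1 := by omega
    set m := w.length - (k + 1) with hmdef
    have hm1 : 1 ≤ m := by omega
    have hmlt : m < w.length := by omega
    rw [hmn] at hF
    set c := w[m]'hmlt with hc
    set Φ : (List A → ℤ) →ₗ[ℤ] (List A → ℤ) :=
      LinearMap.funLeft ℤ ℤ (fun v : List A => v ++ [c]) with hΦ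
    -- window helpers at p = 0
    have hgl : (w.take (m+1)).getLast? = some c := by
      have h := win_getLast? w 0 m (by omega)
      rw [List.drop_zero] at h
      rw [h, hc]; simp only [Nat.zero_add]
    have hdl : (w.take (m+1)).dropLast = w.take m := by
      have h := win_dropLast w 0 m (by omega)
      rwa [List.drop_zero] at h
    have htl : (w.take (m+1)).tail = (w.drop 1).take m := by
      have h := win_tail w 0 m
      rwa [List.drop_zero] at h
    have key : (fun v => E (v ++ w.drop m) w - E v (w.take m))
        = Φ (fun v => E (v ++ w.drop (m+1)) w - E v (w.take (m+1)))
          - (if (w.take (m+1)).head? = some c then gen w 1 m else 0) := by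
      funext v
      have h1 : v ++ w.drop m = (v ++ [c]) ++ w.drop (m+1) := by
        rw [List.append_assoc, List.singleton_append]
        congr 1
        exact List.drop_eq_getElem_cons hmlt
      have h2 : E (v ++ [c]) (w.take (m+1))
          = E v (w.take m)
            - (if (w.take (m+1)).head? = some c then E v ((w.drop 1).take m) else 0) := by
        rw [E_concat v c (w.take (m+1)) (by rw [List.length_take]; omega)]
        rw [if_pos hgl, hdl, htl]
      simp only [hΦ, LinearMap.funLeft_apply, Pi.sub_apply]
      rw [← h1, h2]
      by_cases hcond : (w.take (m+1)).head? = some c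
      · simp only [if_pos hcond, gen]; ring
      · simp only [if_neg hcond, Pi.zero_apply]; ring
    have hmap : ∀ g ∈ {f : List A → ℤ | ∃ p, 1 ≤ p ∧ p ≤ k ∧ f = gen w p (m+1)},
        Φ g ∈ Submodule.span ℤ
          {f : List A → ℤ | ∃ p, 1 ≤ p ∧ p ≤ k + 1 ∧ f = gen w p m} := by
      rintro g ⟨p, hp1, hpk, rfl⟩
      have hpm : p + (m+1) ≤ w.length := by omega
      have hΦg : Φ (gen w p (m+1))
          = (if ((w.drop p).take (m+1)).getLast? = some c then gen w p m else 0)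
            - (if ((w.drop p).take (m+1)).head? = some c then gen w (p+1) m else 0) := by
        funext v
        simp only [hΦ, LinearMap.funLeft_apply, gen, Pi.sub_apply]
        rw [E_concat v c _ (by rw [win_length w p (m+1) hpm]; omega)]
        rw [win_dropLast w p m hpm, win_tail w p m]
        by_cases h1 : ((w.drop p).take (m+1)).getLast? = some c <;>
          by_cases h2 : ((w.drop p).take (m+1)).head? = some c <;>
          simp [h1, h2, gen, ite_apply, Pi.zero_apply]
      rw [hΦg]
      apply sub_mem
      · split_ifs
        · exact Submodule.subset_span ⟨p, hp1, by omega, rfl⟩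
        · exact zero_mem _
      · split_ifs
        · exact Submodule.subset_span ⟨p + 1, by omega, by omega, rfl⟩
        · exact zero_mem _
    have hΦF : Φ (fun v => E (v ++ w.drop (m+1)) w - E v (w.take (m+1)))
        ∈ Submodule.span ℤ {f : List A → ℤ | ∃ p, 1 ≤ p ∧ p ≤ k + 1 ∧ f = gen w p m} := by
      have hle : Submodule.map Φ
          (Submodule.span ℤ {f : List A → ℤ | ∃ p, 1 ≤ p ∧ p ≤ k ∧ f = gen w p (m+1)})
          ≤ Submodule.span ℤ {f : List A → ℤ | ∃ p, 1 ≤ p ∧ p ≤ k + 1 ∧ f = gen w p m} := by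
        rw [Submodule.map_span]
        apply Submodule.span_le.mpr
        rintro f ⟨g, hg, rfl⟩
        exact hmap g hg
      exact hle (Submodule.mem_map_of_mem hF)
    rw [key]
    apply sub_mem hΦF
    split_ifs
    · exact Submodule.subset_span ⟨1, le_refl 1, by omega, rfl⟩
    · exact zero_mem _


lemma windowB (w : List A) : ∀ j, j + 2 ≤ w.length →
    (fun v => E (v ++ (w.take j).reverse) w - (-1:ℤ)^j * E v (w.drop j))
      ∈ Submodule.span ℤ
        {f : List A → ℤ | ∃ p, p + 1 ≤ j ∧ f = gen w p (w.length - j)} := by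
  intro j
  induction j with
  | zero =>
    intro _
    have h0 : (fun v => E (v ++ (w.take 0).reverse) w - (-1:ℤ)^0 * E v (w.drop 0))
        = (0 : List A → ℤ) := by
      funext v
      simp
    rw [h0]; exact Submodule.zero_mem _
  | succ j ih =>
    intro hj
    have hF := ih (by omega)
    have hmn : w.length - j = (w.length - (j+1)) + 1 := by omega
    set m := w.length - (j + 1) with hmdef
    have hjlt : j < w.length := by omega
    rw [hmn] at hF
    set c := w[j]'hjlt with hc
    set Φ : (List A → ℤ) →ₗ[ℤ] (List A → ℤ) :=
      LinearMap.funLeft ℤ ℤ (fun v : List A => v ++ [c]) with hΦ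
    have htk : (w.take (j+1)).reverse = c :: (w.take j).reverse := by
      rw [List.take_succ, List.getElem?_eq_getElem hjlt]
      rw [List.reverse_append]
      rw [hc]
      rfl
    have hhd : (w.drop j).head? = some c := by
      rw [drop_head? w j hjlt, hc]
    have htl2 : (w.drop j).tail = w.drop (j+1) := List.tail_drop
    have hdl2 : (w.drop j).dropLast = (w.drop j).take m := by
      have hmm : w.length - j - 1 = m := by omega
      rw [List.dropLast_eq_take, List.length_drop, hmm]
    have key : (fun v => E (v ++ (w.take (j+1)).reverse) w - (-1:ℤ)^(j+1) * E v (w.drop (j+1)))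
        = Φ (fun v => E (v ++ (w.take j).reverse) w - (-1:ℤ)^j * E v (w.drop j))
          + (-1:ℤ)^j • (if (w.drop j).getLast? = some c then gen w j m else 0) := by
      funext v
      have h1 : v ++ (w.take (j+1)).reverse = (v ++ [c]) ++ (w.take j).reverse := by
        rw [htk, List.append_assoc, List.singleton_append]
      have h2 : E (v ++ [c]) (w.drop j)
          = (if (w.drop j).getLast? = some c then E v ((w.drop j).take m) else 0)
            - E v (w.drop (j+1)) := by
        rw [E_concat v c (w.drop j) (by rw [List.length_drop]; omega)]
        rw [if_pos hhd, htl2, hdl2]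
      simp only [hΦ, LinearMap.funLeft_apply, Pi.add_apply, Pi.smul_apply, Pi.sub_apply,
        smul_eq_mul]
      rw [h1, h2]
      by_cases hcond : (w.drop j).getLast? = some c
      · simp only [if_pos hcond, gen, pow_succ]; ring
      · simp only [if_neg hcond, Pi.zero_apply, pow_succ]; ring
    have hmap : ∀ g ∈ {f : List A → ℤ | ∃ p, p + 1 ≤ j ∧ f = gen w p (m+1)},
        Φ g ∈ Submodule.span ℤ
          {f : List A → ℤ | ∃ p, p + 1 ≤ j + 1 ∧ f = gen w p m} := by
      rintro g ⟨p, hpj, rfl⟩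
      have hpm : p + (m+1) ≤ w.length := by omega
      have hΦg : Φ (gen w p (m+1))
          = (if ((w.drop p).take (m+1)).getLast? = some c then gen w p m else 0)
            - (if ((w.drop p).take (m+1)).head? = some c then gen w (p+1) m else 0) := by
        funext v
        simp only [hΦ, LinearMap.funLeft_apply, gen, Pi.sub_apply]
        rw [E_concat v c _ (by rw [win_length w p (m+1) hpm]; omega)]
        rw [win_dropLast w p m hpm, win_tail w p m]
        by_cases h1 : ((w.drop p).take (m+1)).getLast? = some c <;>
          by_cases h2 : ((w.drop p).take (m+1)).head? = some c <;>
          simp [h1, h2, gen, ite_apply, Pi.zero_apply]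
      rw [hΦg]
      apply sub_mem
      · split_ifs
        · exact Submodule.subset_span ⟨p, by omega, rfl⟩
        · exact zero_mem _
      · split_ifs
        · exact Submodule.subset_span ⟨p + 1, by omega, rfl⟩
        · exact zero_mem _
    have hΦF : Φ (fun v => E (v ++ (w.take j).reverse) w - (-1:ℤ)^j * E v (w.drop j))
        ∈ Submodule.span ℤ {f : List A → ℤ | ∃ p, p + 1 ≤ j + 1 ∧ f = gen w p m} := by
      have hle : Submodule.map Φ
          (Submodule.span ℤ {f : List A → ℤ | ∃ p, p + 1 ≤ j ∧ f = gen w p (m+1)})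
          ≤ Submodule.span ℤ {f : List A → ℤ | ∃ p, p + 1 ≤ j + 1 ∧ f = gen w p m} := by
        rw [Submodule.map_span]
        apply Submodule.span_le.mpr
        rintro f ⟨g, hg, rfl⟩
        exact hmap g hg
      exact hle (Submodule.mem_map_of_mem hF)
    rw [key]
    apply add_mem hΦF
    apply Submodule.smul_mem
    split_ifs
    · exact Submodule.subset_span ⟨j, by omega, rfl⟩
    · exact zero_mem _


/-- Cut off a suffix of `w` at a letter all of whose occurrences lie in the zone
`[n-q, q]`; the coefficient reduces to that of the prefix. -/
lemma M5z (w : List A) (q : ℕ) (hq1 : 1 ≤ q) (hqn : q < w.length)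
    (hz : ∀ i, (hi : i < w.length) → w[i]'hi = w[q]'hqn → (w.length - q ≤ i ∧ i ≤ q)) :
    ∀ v, E (v ++ w.drop q) w = E v (w.take q) := by
  intro v
  set z := w[q]'hqn with hzdef
  have hwA := windowA w (w.length - (q+1)) (by omega)
  have hk : w.length - (w.length - (q+1)) = q + 1 := by omega
  rw [hk] at hwA
  have h0 : E ((v ++ [z]) ++ w.drop (q+1)) w - E (v ++ [z]) (w.take (q+1)) = 0 := by
    apply span_eval_zero hwA
    rintro g ⟨p, hp1, hp2, rfl⟩
    have hpm : p + q + 1 ≤ w.length := by omega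
    show E (v ++ [z]) ((w.drop p).take (q+1)) = 0
    rw [E_concat v z _ (by rw [win_length w p (q+1) (by omega)]; omega)]
    have hng : ¬(((w.drop p).take (q+1)).getLast? = some z) := by
      rw [win_getLast? w p q hpm]
      intro hcon
      have heq := Option.some_inj.mp hcon
      rw [hzdef] at heq
      have := hz (p+q) (by omega) heq
      omega
    have hnh : ¬(((w.drop p).take (q+1)).head? = some z) := by
      rw [win_head? w p q (by omega)]
      intro hcon
      have heq := Option.some_inj.mp hcon
      rw [hzdef] at heq
      have := hz p (by omega) heq
      omega
    rw [if_neg hng, if_neg hnh, sub_zero]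
  have h1 : (v ++ [z]) ++ w.drop (q+1) = v ++ w.drop q := by
    rw [List.append_assoc, List.singleton_append]
    congr 1
    exact (List.drop_eq_getElem_cons hqn).symm
  have h2 : E (v ++ [z]) (w.take (q+1)) = E v (w.take q) := by
    rw [E_concat v z _ (by rw [List.length_take]; omega)]
    have hgl : (w.take (q+1)).getLast? = some z := by
      have h := win_getLast? w 0 q (by omega)
      rw [List.drop_zero] at h
      rw [h, hzdef]
      simp only [Nat.zero_add]
    have hdl : (w.take (q+1)).dropLast = w.take q := by
      have h := win_dropLast w 0 q (by omega)
      rwa [List.drop_zero] at h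
    have hnh : ¬((w.take (q+1)).head? = some z) := by
      have h := win_head? w 0 q (by omega)
      rw [List.drop_zero] at h
      rw [h]
      intro hcon
      have heq := Option.some_inj.mp hcon
      rw [hzdef] at heq
      have := hz 0 (by omega) heq
      omega
    rw [if_pos hgl, if_neg hnh, hdl, sub_zero]
  rw [← h1, sub_eq_zero.mp h0, h2]

/-- Cut off a reversed prefix of `w` at a letter all of whose occurrences lie in the zone
`[q, n-2-q]`; the coefficient reduces (up to sign) to that of the suffix. -/
lemma M6z (w : List A) (q : ℕ) (hq : 2*q + 2 ≤ w.length)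
    (hz : ∀ i, (hi : i < w.length) → w[i]'hi = w[q]'(by omega) → (q ≤ i ∧ i + q + 2 ≤ w.length)) :
    ∀ v, E (v ++ (w.take (q+1)).reverse) w = (-1:ℤ)^(q+1) * E v (w.drop (q+1)) := by
  intro v
  have hqn : q < w.length := by omega
  set z := w[q]'hqn with hzdef
  have hwB := windowB w q (by omega)
  have h0 : E ((v ++ [z]) ++ (w.take q).reverse) w - (-1:ℤ)^q * E (v ++ [z]) (w.drop q) = 0 := by
    apply span_eval_zero hwB
    rintro g ⟨p, hpj, rfl⟩
    show E (v ++ [z]) ((w.drop p).take (w.length - q)) = 0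
    have hmq : w.length - q = (w.length - q - 1) + 1 := by omega
    rw [hmq]
    have hpm : p + (w.length - q - 1) + 1 ≤ w.length := by omega
    rw [E_concat v z _ (by rw [win_length w p _ (by omega)]; omega)]
    have hng : ¬(((w.drop p).take ((w.length - q - 1)+1)).getLast? = some z) := by
      rw [win_getLast? w p (w.length - q - 1) hpm]
      intro hcon
      have heq := Option.some_inj.mp hcon
      rw [hzdef] at heq
      have := hz (p + (w.length - q - 1)) (by omega) heq
      omega
    have hnh : ¬(((w.drop p).take ((w.length - q - 1)+1)).head? = some z) := by
      rw [win_head? w p (w.length - q - 1) (by omega)]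
      intro hcon
      have heq := Option.some_inj.mp hcon
      rw [hzdef] at heq
      have := hz p (by omega) heq
      omega
    rw [if_neg hng, if_neg hnh, sub_zero]
  have h1 : v ++ (w.take (q+1)).reverse = (v ++ [z]) ++ (w.take q).reverse := by
    rw [List.take_succ, List.getElem?_eq_getElem hqn]
    simp only [Option.toList_some, List.reverse_append, List.reverse_singleton,
      List.singleton_append]
    rw [hzdef, List.append_assoc, List.singleton_append]
  have h2 : E (v ++ [z]) (w.drop q) = - E v (w.drop (q+1)) := by
    rw [E_concat v z _ (by rw [List.length_drop]; omega)]
    have hng : ¬((w.drop q).getLast? = some z) := by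
      rw [drop_getLast? w q hqn]
      intro hcon
      have heq := Option.some_inj.mp hcon
      rw [hzdef] at heq
      have := hz (w.length - 1) (by omega) heq
      omega
    have hh : (w.drop q).head? = some z := by rw [drop_head? w q hqn, hzdef]
    rw [if_neg hng, if_pos hh, List.tail_drop]
    ring
  rw [h1, sub_eq_zero.mp h0, h2, pow_succ]
  ring


lemma sum_count_eq (w : List A) : ∑ c ∈ w.toFinset, w.count c = w.length := by
  have h := Multiset.toFinset_sum_count_eq (w : Multiset A)
  simpa using h

lemma toFinset_reverse (w : List A) : w.reverse.toFinset = w.toFinset := by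
  ext c
  simp [List.mem_toFinset]

lemma two_le_count (w : List A) (i j : ℕ) (hij : i < j) (hj : j < w.length)
    (heq : w[i]'(by omega) = w[j]'hj) : 2 ≤ w.count (w[j]'hj) := by
  have h1 : (w[j]'hj) ∈ w.take j := by
    rw [List.mem_iff_getElem]
    refine ⟨i, by rw [List.length_take]; omega, ?_⟩
    rw [List.getElem_take]
    exact heq
  have h2 : (w[j]'hj) ∈ w.drop j := by
    rw [List.mem_iff_getElem]
    refine ⟨0, by rw [List.length_drop]; omega, ?_⟩
    simp [List.getElem_drop]
  have hc : w.count (w[j]'hj) = (w.take j).count (w[j]'hj) + (w.drop j).count (w[j]'hj) := by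
    rw [← List.count_append, List.take_append_drop]
  have c1 : 0 < (w.take j).count (w[j]'hj) := List.count_pos_iff.mpr h1
  have c2 : 0 < (w.drop j).count (w[j]'hj) := List.count_pos_iff.mpr h2
  omega

lemma sigma_take (w : List A) (q : ℕ) (hqn : q < w.length) (a : A)
    (hhead : w.head? = some a) (hlast : w.getLast? = some a) (ha2 : 2 ≤ w.count a)
    (hz1 : w.count (w[q]'hqn) = 1)
    (hmax : ∀ i, (hi : i < w.length) → w.count (w[i]'hi) = 1 → i ≤ q)
    (h2q : w.length ≤ 2*q)
    (hσ : w.length + 2 ≤ 2 * w.toFinset.card) :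
    q + 2 ≤ 2 * (w.take q).toFinset.card := by
  have hn2 : 2 ≤ w.length := le_trans ha2 (List.count_le_length)
  have hq1 : 1 ≤ q := by omega
  set z := w[q]'hqn with hzdef
  set P := w.take q with hP
  set S := w.drop q with hS
  set T := w.toFinset \ P.toFinset with hT
  have hwPS : P ++ S = w := List.take_append_drop q w
  have hcnt : ∀ c, w.count c = P.count c + S.count c := by
    intro c; rw [← List.count_append, hwPS]
  have hTcount : ∀ c ∈ T, w.count c = S.count c := by
    intro c hc
    have hcP : c ∉ P := by
      rw [hT, Finset.mem_sdiff] at hc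
      exact fun hm => hc.2 (List.mem_toFinset.mpr hm)
    rw [hcnt c, List.count_eq_zero.mpr hcP, zero_add]
  have hzS : z ∈ S := by
    rw [List.mem_iff_getElem]
    refine ⟨0, by rw [hS, List.length_drop]; omega, ?_⟩
    simp [hS, List.getElem_drop, hzdef]
  have hzT : z ∈ T := by
    rw [hT, Finset.mem_sdiff]
    refine ⟨List.mem_toFinset.mpr (by rw [hzdef]; exact List.getElem_mem _), ?_⟩
    intro hzP
    have c1 : 0 < P.count z := List.count_pos_iff.mpr (List.mem_toFinset.mp hzP)
    have c2 : 0 < S.count z := List.count_pos_iff.mpr hzS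
    have := hcnt z
    omega
  have ha0 : w[0]'(by omega) = a := by
    have h1 : w[0]? = some a := by rw [← List.head?_eq_getElem?]; exact hhead
    rw [List.getElem?_eq_getElem (by omega)] at h1
    exact Option.some_inj.mp h1
  have han : w[w.length - 1]'(by omega) = a := by
    have h1 : w[w.length - 1]? = some a := by rw [← List.getLast?_eq_getElem?]; exact hlast
    rw [List.getElem?_eq_getElem (by omega)] at h1
    exact Option.some_inj.mp h1
  have haP : a ∈ P := by
    rw [List.mem_iff_getElem]
    refine ⟨0, by rw [hP, List.length_take]; omega, ?_⟩
    show (w.take q)[0]'_ = a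
    rw [List.getElem_take]
    exact ha0
  have haS : a ∈ S := by
    rw [List.mem_iff_getElem]
    refine ⟨w.length - 1 - q, by rw [hS, List.length_drop]; omega, ?_⟩
    show (w.drop q)[w.length - 1 - q]'_ = a
    rw [List.getElem_drop]
    rw [← han]
    congr 1
    omega
  have hanT : a ∉ T := by
    rw [hT, Finset.mem_sdiff]
    push_neg
    intro _
    exact List.mem_toFinset.mpr haP
  have hTsub : T ⊆ S.toFinset.erase a := by
    intro c hc
    rw [Finset.mem_erase]
    constructor
    · rintro rfl; exact hanT hc
    · have hc' := hc
      rw [hT, Finset.mem_sdiff] at hc'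
      have hcw : c ∈ w := List.mem_toFinset.mp hc'.1
      rw [← hwPS, List.mem_append] at hcw
      rcases hcw with h | h
      · exact absurd (List.mem_toFinset.mpr h) hc'.2
      · exact List.mem_toFinset.mpr h
  -- upper bound for the T-sum
  have hsumS : ∑ c ∈ S.toFinset, S.count c = S.length := sum_count_eq S
  have herase : S.count a + ∑ c ∈ S.toFinset.erase a, S.count c = ∑ c ∈ S.toFinset, S.count c :=
    Finset.add_sum_erase _ (fun c => S.count c) (List.mem_toFinset.mpr haS)
  have hupper : ∑ c ∈ T, S.count c ≤ ∑ c ∈ S.toFinset.erase a, S.count c :=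
    Finset.sum_le_sum_of_subset hTsub
  have haSc : 0 < S.count a := List.count_pos_iff.mpr haS
  -- lower bound for the T-sum
  have hzc : S.count z = 1 := by
    have := hTcount z hzT
    rw [← this]
    exact hz1
  have hTerase : ∀ c ∈ T.erase z, 2 ≤ S.count c := by
    intro c hc
    rw [Finset.mem_erase] at hc
    obtain ⟨hcz, hcT⟩ := hc
    rw [← hTcount c hcT]
    have hcw : c ∈ w := by
      rw [hT, Finset.mem_sdiff] at hcT
      exact List.mem_toFinset.mp hcT.1
    obtain ⟨i, hi, hieq⟩ := List.mem_iff_getElem.mp hcw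
    by_contra hlt
    push_neg at hlt
    have h1 : 0 < w.count c := List.count_pos_iff.mpr hcw
    have hone : w.count (w[i]'hi) = 1 := by rw [hieq]; omega
    have hiq : i ≤ q := hmax i hi hone
    rcases Nat.lt_or_ge i q with hiq' | hiq'
    · -- c ∈ P, contradiction with c ∈ T
      have hcP : c ∈ P := by
        rw [List.mem_iff_getElem]
        refine ⟨i, by rw [hP, List.length_take]; omega, ?_⟩
        show (w.take q)[i]'_ = c
        rw [List.getElem_take]
        exact hieq
      rw [hT, Finset.mem_sdiff] at hcT
      exact hcT.2 (List.mem_toFinset.mpr hcP)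
    · -- i = q, so c = z
      have : i = q := by omega
      subst this
      exact hcz (by rw [← hieq, hzdef])
  have hlow : 2 * (T.erase z).card ≤ ∑ c ∈ T.erase z, S.count c := by
    have h := Finset.card_nsmul_le_sum (T.erase z) (fun c => S.count c) 2 hTerase
    simpa [mul_comm] using h
  have hzsum : S.count z + ∑ c ∈ T.erase z, S.count c = ∑ c ∈ T, S.count c :=
    Finset.add_sum_erase _ (fun c => S.count c) hzT
  have hTcard : 0 < T.card := Finset.card_pos.mpr ⟨z, hzT⟩
  have hTec : (T.erase z).card = T.card - 1 := Finset.card_erase_of_mem hzT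
  -- combine to 2 * T.card ≤ S.length
  have hSlen : S.length = w.length - q := by rw [hS, List.length_drop]
  have h2T : 2 * T.card ≤ w.length - q := by omega
  -- card bound
  have hsub2 : w.toFinset ⊆ P.toFinset ∪ T := by
    intro c hc
    rw [Finset.mem_union]
    by_cases h : c ∈ P.toFinset
    · exact Or.inl h
    · exact Or.inr (by rw [hT, Finset.mem_sdiff]; exact ⟨hc, h⟩)
  have hcard : w.toFinset.card ≤ P.toFinset.card + T.card :=
    le_trans (Finset.card_le_card hsub2) (Finset.card_union_le _ _)
  omega


lemma main : ∀ (N : ℕ) (w : List A), w.length ≤ N → w ≠ [] →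
    ((∃ a, w.head? = some a ∧ w.count a = 1) ∨ w.length + 2 ≤ 2 * w.toFinset.card) →
    ∃ v : List A, E v w = 1 ∨ E v w = -1 := by
  intro N
  induction N with
  | zero =>
    intro w hlen hne _
    cases w with
    | nil => exact absurd rfl hne
    | cons x t => simp at hlen
  | succ N ih =>
    intro w hlen hne hyp
    obtain ⟨a, ha⟩ : ∃ a, w.head? = some a := by
      cases w with
      | nil => exact absurd rfl hne
      | cons x t => exact ⟨x, rfl⟩
    by_cases hu : w.count a = 1
    · exact ⟨w, Or.inl (E_self w a ha hu)⟩
    have hσ : w.length + 2 ≤ 2 * w.toFinset.card := by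
      rcases hyp with ⟨a', ha', hc'⟩ | h
      · rw [ha] at ha'
        cases Option.some_inj.mp ha'
        exact absurd hc' hu
      · exact h
    have haw : a ∈ w := List.mem_of_mem_head? (by rw [ha]; rfl)
    have hcpos : 0 < w.count a := List.count_pos_iff.mpr haw
    have hc2 : 2 ≤ w.count a := by omega
    have hn2 : 2 ≤ w.length := le_trans hc2 (List.count_le_length)
    by_cases hl : w.getLast? = some a
    · -- head = last = a : the zone moves
      set UF := w.toFinset.filter (fun c => w.count c = 1) with hUFdef
      have hUF2 : 2 ≤ UF.card := by
        have hsum := sum_count_eq w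
        have hsplit := Finset.sum_filter_add_sum_filter_not w.toFinset
          (fun c => w.count c = 1) (fun c => w.count c)
        have h1 : ∑ c ∈ UF, w.count c = UF.card := by
          rw [hUFdef]
          rw [Finset.sum_congr rfl (fun c hc => (Finset.mem_filter.mp hc).2)]
          simp
        have h2 : 2 * (w.toFinset.filter (fun c => ¬ w.count c = 1)).card
            ≤ ∑ c ∈ w.toFinset.filter (fun c => ¬ w.count c = 1), w.count c := by
          have hb := Finset.card_nsmul_le_sum
            (w.toFinset.filter (fun c => ¬ w.count c = 1)) (fun c => w.count c) 2 ?_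
          · simpa [mul_comm] using hb
          · intro c hc
            rw [Finset.mem_filter] at hc
            have hcw : c ∈ w := List.mem_toFinset.mp hc.1
            have hp := List.count_pos_iff.mpr hcw
            have hne1 : w.count c ≠ 1 := hc.2
            show 2 ≤ w.count c
            omega
        have hcards := Finset.card_filter_add_card_filter_not
          (s := w.toFinset) (p := fun c => w.count c = 1)
        rw [← hUFdef] at hsplit hcards
        omega
      obtain ⟨c₁, hc₁, c₂, hc₂, hc12⟩ := Finset.one_lt_card.mp hUF2
      set I := (Finset.range w.length).filter (fun i => w.count (w.getD i a) = 1) with hIdef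
      have hgetD : ∀ i, (hi : i < w.length) → w.getD i a = w[i]'hi := by
        intro i hi
        rw [List.getD_eq_getElem?_getD, List.getElem?_eq_getElem hi]
        rfl
      have hImem : ∀ i, (hi : i < w.length) → (w.count (w[i]'hi) = 1 ↔ i ∈ I) := by
        intro i hi
        rw [hIdef, Finset.mem_filter, Finset.mem_range, hgetD i hi]
        constructor
        · exact fun h => ⟨hi, h⟩
        · exact fun h => h.2
      have hpos : ∀ c ∈ UF, ∃ i, ∃ hi : i < w.length, w[i]'hi = c ∧ i ∈ I := by
        intro c hc
        rw [hUFdef, Finset.mem_filter] at hc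
        obtain ⟨i, hi, heq⟩ := List.mem_iff_getElem.mp (List.mem_toFinset.mp hc.1)
        exact ⟨i, hi, heq, (hImem i hi).mp (by rw [heq]; exact hc.2)⟩
      obtain ⟨i₁, hi₁, heq₁, hiI₁⟩ := hpos c₁ hc₁
      obtain ⟨i₂, hi₂, heq₂, hiI₂⟩ := hpos c₂ hc₂
      have hi12 : i₁ ≠ i₂ := by rintro rfl; exact hc12 (heq₁.symm.trans heq₂)
      have hInonempty : I.Nonempty := ⟨i₁, hiI₁⟩
      set q := I.max' hInonempty with hqdef
      have hqI : q ∈ I := I.max'_mem hInonempty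
      have hqn : q < w.length := by
        have h := hqI; rw [hIdef, Finset.mem_filter, Finset.mem_range] at h; exact h.1
      have hcq : w.count (w[q]'hqn) = 1 := by
        have h := hqI; rw [hIdef, Finset.mem_filter] at h
        rw [← hgetD q hqn]; exact h.2
      have hmax : ∀ i, (hi : i < w.length) → w.count (w[i]'hi) = 1 → i ≤ q :=
        fun i hi h => I.le_max' i ((hImem i hi).mp h)
      have huniqpos : ∀ (j : ℕ) (hj : j < w.length), w.count (w[j]'hj) = 1 →
          ∀ i, (hi : i < w.length) → w[i]'hi = w[j]'hj → i = j := by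
        intro j hj hcount i hi heq
        by_contra hne'
        rcases Nat.lt_or_ge i j with hlt | hge
        · have := two_le_count w i j hlt hj heq
          omega
        · have hlt : j < i := by omega
          have h2c := two_le_count w j i hlt hi heq.symm
          rw [heq] at h2c
          omega
      by_cases hA : w.length ≤ 2 * q
      · -- case A : cut at q, keep the prefix
        have hq1 : 1 ≤ q := by omega
        have hzone : ∀ i, (hi : i < w.length) → w[i]'hi = w[q]'hqn →
            (w.length - q ≤ i ∧ i ≤ q) := by
          intro i hi heq
          have := huniqpos q hqn hcq i hi heq
          omega
        have hst := sigma_take w q hqn a ha hl hc2 hcq hmax hA hσ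
        have hlq : (w.take q).length = q := by rw [List.length_take]; omega
        have htne : w.take q ≠ [] := by
          intro hcon; rw [hcon] at hlq; simp at hlq; omega
        obtain ⟨v, hv⟩ := ih (w.take q) (by omega) htne (Or.inr (by rw [hlq]; exact hst))
        refine ⟨v ++ w.drop q, ?_⟩
        rw [M5z w q hq1 hqn hzone v]
        exact hv
      · -- case B : cut at q' (minimum), keep the suffix
        set q' := I.min' hInonempty with hq'def
        have hq'I : q' ∈ I := I.min'_mem hInonempty
        have hq'n : q' < w.length := by
          have h := hq'I; rw [hIdef, Finset.mem_filter, Finset.mem_range] at h; exact h.1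
        have hcq' : w.count (w[q']'hq'n) = 1 := by
          have h := hq'I; rw [hIdef, Finset.mem_filter] at h
          rw [← hgetD q' hq'n]; exact h.2
        have hmin : ∀ i, (hi : i < w.length) → w.count (w[i]'hi) = 1 → q' ≤ i :=
          fun i hi h => I.min'_le i ((hImem i hi).mp h)
        have hq'q : q' < q := by
          have h1 : q' ≤ i₁ := I.min'_le i₁ hiI₁
          have h2 : q' ≤ i₂ := I.min'_le i₂ hiI₂
          have h3 : i₁ ≤ q := I.le_max' i₁ hiI₁
          have h4 : i₂ ≤ q := I.le_max' i₂ hiI₂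
          omega
        have hB : 2*q' + 2 ≤ w.length := by omega
        have hzone' : ∀ i, (hi : i < w.length) → w[i]'hi = w[q']'(by omega) →
            (q' ≤ i ∧ i + q' + 2 ≤ w.length) := by
          intro i hi heq
          have := huniqpos q' hq'n hcq' i hi heq
          omega
        have hrevlen : w.reverse.length = w.length := List.length_reverse
        have hrq : w.length - 1 - q' < w.reverse.length := by omega
        have hrev_get : w.reverse[w.length - 1 - q']'hrq = w[q']'hq'n := by
          rw [List.getElem_reverse]
          congr 1
          omega
        have hmaxR : ∀ i, (hi : i < w.reverse.length) →
            w.reverse.count (w.reverse[i]'hi) = 1 → i ≤ w.length - 1 - q' := by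
          intro i hi h
          have hin : i < w.length := by omega
          have hg : w.reverse[i]'hi = w[w.length - 1 - i]'(by omega) := by
            rw [List.getElem_reverse]
          rw [hg, List.count_reverse] at h
          have := hmin (w.length - 1 - i) (by omega) h
          omega
        have hstR := sigma_take w.reverse (w.length - 1 - q') hrq a
          (by rw [List.head?_reverse]; exact hl)
          (by rw [List.getLast?_reverse]; exact ha)
          (by rw [List.count_reverse]; exact hc2)
          (by rw [hrev_get, List.count_reverse]; exact hcq')
          hmaxR
          (by rw [hrevlen]; omega)
          (by rw [hrevlen, toFinset_reverse]; exact hσ)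
        have htakerev : w.reverse.take (w.length - 1 - q') = (w.drop (q'+1)).reverse := by
          rw [List.take_reverse]
          have hh : w.length - (w.length - 1 - q') = q' + 1 := by omega
          rw [hh]
        have hsuffne : w.drop (q'+1) ≠ [] := by
          have hld : (w.drop (q'+1)).length = w.length - (q'+1) := List.length_drop
          intro hcon; rw [hcon] at hld; simp at hld; omega
        have hsufσ : (w.drop (q'+1)).length + 2 ≤ 2 * (w.drop (q'+1)).toFinset.card := by
          have h1 : (w.drop (q'+1)).toFinset = (w.reverse.take (w.length - 1 - q')).toFinset := by
            rw [htakerev, toFinset_reverse]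
          rw [h1, List.length_drop]
          omega
        obtain ⟨v, hv⟩ := ih (w.drop (q'+1)) (by rw [List.length_drop]; omega) hsuffne
          (Or.inr hsufσ)
        refine ⟨v ++ (w.take (q'+1)).reverse, ?_⟩
        rw [M6z w q' hB hzone' v]
        rcases Nat.even_or_odd (q'+1) with he | ho
        · rw [he.neg_one_pow]
          rcases hv with h | h
          · left; rw [h]; ring
          · right; rw [h]; ring
        · rw [ho.neg_one_pow]
          rcases hv with h | h
          · right; rw [h]; ring
          · left; rw [h]; ring
    · -- strip the head
      obtain ⟨t, rfl⟩ : ∃ t, w = a :: t := by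
        cases w with
        | nil => exact absurd rfl hne
        | cons x t => exact ⟨t, by rw [show x = a from Option.some_inj.mp ha]⟩
      have ht : t ≠ [] := by rintro rfl; simp at hn2
      have hcc : (a :: t).count a = t.count a + 1 := by simp [List.count_cons]
      have hat : a ∈ t := List.count_pos_iff.mp (by omega)
      have htf : t.toFinset = (a :: t).toFinset := by
        rw [List.toFinset_cons, Finset.insert_eq_self.mpr (List.mem_toFinset.mpr hat)]
      have hyp' : t.length + 2 ≤ 2 * t.toFinset.card := by
        rw [htf]
        have hlc : (a :: t).length = t.length + 1 := rfl
        omega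
      have hlt : t.length ≤ N := by
        have := hlen
        simp only [List.length_cons] at this
        omega
      obtain ⟨v, hv⟩ := ih t hlt ht (Or.inr hyp')
      refine ⟨v ++ [a], ?_⟩
      have hst := E_strip (a :: t) a rfl hl hn2 v
      simp only [List.tail_cons] at hst
      rw [hst]
      rcases hv with h | h
      · right; rw [h]
      · left; rw [h]; norm_num


end S13

/-- if `|alph(w)| > ⌈|w|/2⌉` then `c(w) = 1`, i.e. there is a Lie
polynomial over `ℤ` in which `w` appears with coefficient `1`. -/
theorem exists_lie_poly_coeff_one {A : Type*} [Fintype A] [DecidableEq A]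
    (w : List A) (hw : (w.length + 1) / 2 < w.toFinset.card) :
    ∃ Q ∈ freeLie ℤ A, Q.coeff (FreeMonoid.ofList w) = 1 := by
  have hne : w ≠ [] := by rintro rfl; simp at hw
  have hcard : w.toFinset.card ≤ w.length := by
    have := Multiset.toFinset_card_le (w : Multiset A)
    simpa using this
  have hσ : w.length + 2 ≤ 2 * w.toFinset.card := by omega
  obtain ⟨v, hv⟩ := S13.main w.length w le_rfl hne (Or.inr hσ)
  have hvne : v ≠ [] := by
    rintro rfl
    rw [S13.E_nil] at hv
    rcases hv with h | h <;> exact absurd h (by norm_num)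
  rcases hv with h | h
  · exact ⟨S13.lnb v, S13.lnb_mem_freeLie v hvne, h⟩
  · refine ⟨-S13.lnb v, neg_mem (S13.lnb_mem_freeLie v hvne), ?_⟩
    have hneg : (-(S13.lnb v)).coeff (FreeMonoid.ofList w)
        = -((S13.lnb v).coeff (FreeMonoid.ofList w)) := rfl
    rw [hneg]
    show -(S13.E v w) = 1
    rw [h]
    norm_num
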